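/- Let ℓ be a prime, n ≥ 1, ζ a primitive ℓ^n-th root of unity, and m ≥ 1 with ℓ^n ∤ m. Then Φ_m(ζ) is an S-unit, where S consists of the unique prime above ℓ; that is, the ideal generated by Φ_m(ζ) is a power of the prime ideal (1-ζ). -/

import Mathlib

open NumberField Polynomial

/-- If `t` is a primitive `d`-th root of unity with `d > 1` in a domain, then `1 - t ∣ d`. -/
lemma aux_sub_one_dvd {R : Type*} [CommRing R] [IsDomain R] {t : R} {d : ℕ}
    (hd : 1 < d) (ht : IsPrimitiveRoot t d) : (1 - t) ∣ (d : R) := by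
  classical
  have hd0 : 0 < d := by omega
  have h1 : (X : R[X]) ^ d - 1 = ∏ μ ∈ nthRootsFinset d (1 : R), (X - C μ) :=
    X_pow_sub_one_eq_prod hd0 ht
  have hone : (1 : R) ∈ nthRootsFinset d (1 : R) := Polynomial.one_mem_nthRootsFinset hd0
  have h2 : (X : R[X]) ^ d - 1 =
      (X - C 1) * ∏ μ ∈ (nthRootsFinset d (1 : R)).erase 1, (X - C μ) := by
    rw [h1, ← Finset.mul_prod_erase _ _ hone]
  rw [map_one] at h2
  have h3 : (∑ i ∈ Finset.range d, (X : R[X]) ^ i) * (X - 1) = X ^ d - 1 := geom_sum_mul X d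
  have hX1 : (X - 1 : R[X]) ≠ 0 := by
    have h := Polynomial.X_sub_C_ne_zero (1 : R)
    rwa [map_one] at h
  have h4 : (∑ i ∈ Finset.range d, (X : R[X]) ^ i) =
      ∏ μ ∈ (nthRootsFinset d (1 : R)).erase 1, (X - C μ) := by
    apply mul_right_cancel₀ hX1
    rw [h3, h2, mul_comm]
  have h5 : (d : R) = ∏ μ ∈ (nthRootsFinset d (1 : R)).erase 1, (1 - μ) := by
    have h := congrArg (Polynomial.eval (1 : R)) h4
    simpa [eval_finset_sum, eval_prod] using h
  have htne1 : t ≠ 1 := by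
    intro h
    have h2 : d ∣ 1 := ht.dvd_of_pow_eq_one 1 (by simp [h])
    have := Nat.dvd_one.mp h2
    omega
  have hmem : t ∈ (nthRootsFinset d (1 : R)).erase 1 :=
    Finset.mem_erase.2 ⟨htne1, ht.mem_nthRootsFinset hd0⟩
  rw [h5]
  exact Finset.dvd_prod_of_mem _ hmem

set_option maxHeartbeats 1000000 in
set_option synthInstance.maxHeartbeats 400000 in
theorem stmt_2 (ℓ : ℕ) (hℓ : ℓ.Prime) (n : ℕ) (hn : 1 ≤ n)
    (K : Type*) [Field K] [NumberField K] (ζ : 𝓞 K)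
    (hζ : IsPrimitiveRoot ζ (ℓ ^ n))
    (hgen : Algebra.adjoin ℚ {(ζ : K)} = ⊤)
    (m : ℕ) (hm : 1 ≤ m) (hdvd : ¬ (ℓ ^ n ∣ m)) :
    ∃ k : ℕ, Ideal.span {(Polynomial.cyclotomic m (𝓞 K)).eval ζ} =
      (Ideal.span {(1 : 𝓞 K) - ζ}) ^ k := by
  obtain ⟨k, rfl⟩ : ∃ k, n = k + 1 := ⟨n - 1, by omega⟩
  set p : ℕ+ := ⟨ℓ, hℓ.pos⟩ with hpdef
  haveI : Fact (p : ℕ).Prime := ⟨hℓ⟩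
  have hcast : ((p ^ (k + 1) : ℕ+) : ℕ) = ℓ ^ (k + 1) := by
    rw [PNat.pow_coe]; rfl
  have hinj : Function.Injective (algebraMap (𝓞 K) K) := IsFractionRing.injective _ _
  have hζK : IsPrimitiveRoot ((ζ : K)) (ℓ ^ (k + 1)) := hζ.map_of_injective hinj
  have hζK' : IsPrimitiveRoot ((ζ : K)) ((p ^ (k + 1) : ℕ+) : ℕ) := by
    rw [hcast]; exact hζK
  haveI : IsCyclotomicExtension {(p : ℕ) ^ (k + 1)} ℚ K := by
    rw [IsCyclotomicExtension.iff_adjoin_eq_top]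
    refine ⟨fun q hq _ => ?_, ?_⟩
    · rw [Set.mem_singleton_iff] at hq; subst hq
      exact ⟨(ζ : K), hζK⟩
    · rw [eq_top_iff, ← hgen]
      apply Algebra.adjoin_mono
      intro y hy
      rw [Set.mem_singleton_iff] at hy
      subst hy
      exact ⟨(p : ℕ) ^ (k + 1), Set.mem_singleton _, pow_ne_zero _ hℓ.ne_zero, hζK.pow_eq_one⟩
  -- `ζ - 1` is prime in `𝓞 K`
  have hprime : Prime (ζ - 1 : 𝓞 K) := by
    have hζK'' : IsPrimitiveRoot (ζ : K) ((p : ℕ) ^ (k + 1)) := hζK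
    have h := hζK''.zeta_sub_one_prime
    have het : hζK''.toInteger = ζ := by ext; rfl
    rwa [het] at h
  set x : 𝓞 K := (Polynomial.cyclotomic m (𝓞 K)).eval ζ with hxdef
  set t : 𝓞 K := ζ ^ m with htdef
  have htpow : t ^ (ℓ ^ (k + 1)) = 1 := by
    rw [htdef, ← pow_mul, mul_comm, pow_mul, hζ.pow_eq_one, one_pow]
  have htne : t ≠ 1 := fun h => hdvd (hζ.dvd_of_pow_eq_one m h)
  -- `x` divides `t - 1`
  have hxdvd1 : x ∣ t - 1 := by
    obtain ⟨q, hq⟩ := cyclotomic.dvd_X_pow_sub_one (R := 𝓞 K) (n := m)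
    refine ⟨q.eval ζ, ?_⟩
    have h := congrArg (Polynomial.eval ζ) hq
    simpa [htdef, hxdef] using h
  -- order of `t`
  set d := orderOf t with hddef
  have htord : IsPrimitiveRoot t d :=
    ⟨pow_orderOf_eq_one t, fun l hl => orderOf_dvd_of_pow_eq_one hl⟩
  have hddvd : d ∣ ℓ ^ (k + 1) := orderOf_dvd_of_pow_eq_one htpow
  have hd0 : d ≠ 0 := by
    intro h
    rw [h] at hddvd
    exact (pow_ne_zero (k + 1) hℓ.ne_zero) (zero_dvd_iff.1 hddvd)
  have hd1 : d ≠ 1 := fun h => htne (orderOf_eq_one_iff.1 h)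
  have h6 : (1 - t) ∣ ((d : ℕ) : 𝓞 K) := aux_sub_one_dvd (by omega) htord
  have h7 : (t - 1 : 𝓞 K) ∣ ((d : ℕ) : 𝓞 K) := by
    rw [← neg_sub (1 : 𝓞 K) t]
    exact neg_dvd.mpr h6
  have h8 : ((d : ℕ) : 𝓞 K) ∣ ((ℓ ^ (k + 1) : ℕ) : 𝓞 K) := Nat.cast_dvd_cast hddvd
  have hx_l : x ∣ ((ℓ : 𝓞 K)) ^ (k + 1) := by
    have h := (hxdvd1.trans h7).trans h8
    rwa [Nat.cast_pow] at h
  have hxne : x ≠ 0 := by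
    intro h0
    obtain ⟨c, hc⟩ := hxdvd1
    exact (sub_ne_zero.mpr htne) (by rw [hc, h0, zero_mul])
  -- key : any prime ideal containing x contains ζ - 1
  have key : ∀ Q : Ideal (𝓞 K), Q.IsPrime → x ∈ Q → (ζ - 1 : 𝓞 K) ∈ Q := by
    intro Q hQ hxQ
    haveI := hQ
    have hl : ((ℓ : 𝓞 K)) ∈ Q := by
      have hmem : ((ℓ : 𝓞 K)) ^ (k + 1) ∈ Q := by
        obtain ⟨c, hc⟩ := hx_l
        rw [hc]
        exact Ideal.mul_mem_right _ _ hxQ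
      exact hQ.mem_of_pow_mem _ hmem
    have hchar : ((ℓ : ℕ) : 𝓞 K ⧸ Q) = 0 := by
      rw [← map_natCast (Ideal.Quotient.mk Q)]
      exact Ideal.Quotient.eq_zero_iff_mem.mpr hl
    have hrc : ringChar (𝓞 K ⧸ Q) = ℓ := by
      have hdvd' := ringChar.dvd hchar
      rcases (Nat.dvd_prime hℓ).1 hdvd' with h | h
      · exact absurd h (CharP.char_ne_one (𝓞 K ⧸ Q) (ringChar (𝓞 K ⧸ Q)))
      · exact h
    haveI : CharP (𝓞 K ⧸ Q) ℓ := ringChar.eq_iff.mp hrc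
    haveI : Fact ℓ.Prime := ⟨hℓ⟩
    have hz : (Ideal.Quotient.mk Q ζ - 1) ^ (ℓ ^ (k + 1)) = 0 := by
      rw [sub_pow_char_pow, ← map_pow, hζ.pow_eq_one, map_one, one_pow, sub_self]
    have hz0 : Ideal.Quotient.mk Q ζ - 1 = 0 :=
      (pow_eq_zero_iff (pow_ne_zero (k + 1) hℓ.ne_zero)).1 hz
    have : Ideal.Quotient.mk Q (ζ - 1) = 0 := by
      rw [map_sub, map_one, hz0]
    exact Ideal.Quotient.eq_zero_iff_mem.mp this
  set P : Ideal (𝓞 K) := Ideal.span {(ζ - 1 : 𝓞 K)} with hPdef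
  have hPprime : P.IsPrime := (Ideal.span_singleton_prime hprime.ne_zero).2 hprime
  have hPbot : P ≠ ⊥ := by
    simp [hPdef, Ideal.span_singleton_eq_bot, hprime.ne_zero]
  have hPmax : P.IsMaximal := hPprime.isMaximal hPbot
  set I : Ideal (𝓞 K) := Ideal.span {x} with hIdef
  have hIne : I ≠ 0 := by
    simpa [hIdef, Ideal.span_singleton_eq_bot, Submodule.zero_eq_bot] using hxne
  have hassoc := UniqueFactorizationMonoid.factors_prod hIne
  have heq : (UniqueFactorizationMonoid.factors I).prod = I := associated_iff_eq.mp hassoc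
  have hall : ∀ Q ∈ UniqueFactorizationMonoid.factors I, Q = P := by
    intro Q hQs
    have hQp : Prime Q := UniqueFactorizationMonoid.prime_of_factor Q hQs
    have hQdvd : Q ∣ I := heq ▸ Multiset.dvd_prod hQs
    have hle : I ≤ Q := Ideal.le_of_dvd hQdvd
    have hQprime : Q.IsPrime := Ideal.isPrime_of_prime hQp
    have hxQ : x ∈ Q := hle (Ideal.mem_span_singleton_self x)
    have hzQ : (ζ - 1 : 𝓞 K) ∈ Q := key Q hQprime hxQ
    have hPQ : P ≤ Q := by
      rw [hPdef]
      exact Ideal.span_le.2 (by simpa using hzQ)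
    exact (hPmax.eq_of_le hQprime.ne_top hPQ).symm
  have hrepl : UniqueFactorizationMonoid.factors I =
      Multiset.replicate (Multiset.card (UniqueFactorizationMonoid.factors I)) P :=
    Multiset.eq_replicate_of_mem hall
  have hpow : P ^ (Multiset.card (UniqueFactorizationMonoid.factors I)) = I := by
    rw [hrepl, Multiset.prod_replicate] at heq
    exact heq
  have hspan : Ideal.span {(1 : 𝓞 K) - ζ} = P := by
    rw [hPdef, show (1 : 𝓞 K) - ζ = -(ζ - 1) by ring, Ideal.span_singleton_neg]
  exact ⟨Multiset.card (UniqueFactorizationMonoid.factors I), by rw [hspan]; exact hpow.symm⟩
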